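/- Let u be a fully commutative element of W(A_n) with σ_1 ∈ Supp(u). Then σ_1 occurs exactly once in every reduced expression of u. -/

import Mathlib

open CoxeterSystem

def CommMove {B : Type*} (M : CoxeterMatrix B) (ω₁ ω₂ : List B) : Prop :=
  ∃ (l r : List B) (s t : B), M s t = 2 ∧ ω₁ = l ++ s :: t :: r ∧ ω₂ = l ++ t :: s :: r

def CommEquiv {B : Type*} (M : CoxeterMatrix B) : List B → List B → Prop :=
  Relation.ReflTransGen (CommMove M)

def IsRedexOf {B W : Type*} [Group W] {M : CoxeterMatrix B} (cs : CoxeterSystem M W)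
    (ω : List B) (w : W) : Prop :=
  cs.wordProd ω = w ∧ cs.IsReduced ω

def IsFC {B W : Type*} [Group W] {M : CoxeterMatrix B} (cs : CoxeterSystem M W) (w : W) : Prop :=
  ∀ ω₁ ω₂, IsRedexOf cs ω₁ w → IsRedexOf cs ω₂ w → CommEquiv M ω₁ ω₂

section Aux

variable {B W : Type*} [Group W] {M : CoxeterMatrix B} (cs : CoxeterSystem M W)

lemma comm_of_two {i j : B} (h : M i j = 2) :
    cs.simple i * cs.simple j = cs.simple j * cs.simple i := by
  have h2 : (cs.simple i * cs.simple j) * (cs.simple i * cs.simple j) = 1 := by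
    have := cs.simple_mul_simple_pow i j
    rwa [h, pow_succ, pow_one] at this
  have : cs.simple i * cs.simple j = (cs.simple i * cs.simple j)⁻¹ :=
    eq_inv_of_mul_eq_one_left h2
  rw [this, mul_inv_rev, cs.inv_simple, cs.inv_simple]

lemma braid_of_three {i j : B} (h : M i j = 3) :
    cs.simple i * cs.simple j * cs.simple i = cs.simple j * cs.simple i * cs.simple j := by
  have h6 : (cs.simple i * cs.simple j) * (cs.simple i * cs.simple j) *
      (cs.simple i * cs.simple j) = 1 := by
    have := cs.simple_mul_simple_pow i j
    rwa [h, pow_succ, pow_succ, pow_one] at this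
  have key : (cs.simple i * cs.simple j * cs.simple i) *
      (cs.simple j * cs.simple i * cs.simple j) = 1 := by
    rw [show (cs.simple i * cs.simple j * cs.simple i) *
      (cs.simple j * cs.simple i * cs.simple j) = (cs.simple i * cs.simple j) *
      (cs.simple i * cs.simple j) * (cs.simple i * cs.simple j) by group]
    exact h6
  have := eq_inv_of_mul_eq_one_left key
  rw [this]
  simp [mul_inv_rev, cs.inv_simple, mul_assoc]

lemma shuffle {G : Type*} [Group G] (P Q Bb x y : G) (hP : x * P = P * x)
    (hQ : x * Q = Q * x) (hbr : x * y * x = y * x * y) :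
    x * (P * (y * (Q * (x * Bb)))) = P * (y * (x * (y * (Q * Bb)))) := by
  calc x * (P * (y * (Q * (x * Bb))))
      = P * (x * y * (Q * x) * Bb) := by rw [← mul_assoc x P, hP]; group
    _ = P * (x * y * (x * Q) * Bb) := by rw [← hQ]
    _ = P * ((x * y * x) * Q * Bb) := by group
    _ = P * ((y * x * y) * Q * Bb) := by rw [hbr]
    _ = P * (y * (x * (y * (Q * Bb)))) := by group

lemma simple_mul_wordProd_comm {k : B} {m : List B}
    (h : ∀ x ∈ m, cs.simple k * cs.simple x = cs.simple x * cs.simple k) :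
    cs.simple k * cs.wordProd m = cs.wordProd m * cs.simple k := by
  induction m with
  | nil => simp
  | cons y t ih =>
    rw [cs.wordProd_cons, ← mul_assoc, h y (by simp), mul_assoc,
      ih (fun x hx => h x (by simp [hx])), ← mul_assoc]

lemma commEquiv_count [DecidableEq B] {ω₁ ω₂ : List B} (h : CommEquiv M ω₁ ω₂) (b : B) :
    ω₁.count b = ω₂.count b := by
  induction h with
  | refl => rfl
  | tail _ hmv ih =>
    obtain ⟨l, r, s, t, _, h1, h2⟩ := hmv
    rw [ih, h1, h2]
    simp [List.count_append, List.count_cons]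
    omega

end Aux

section ListSplit

variable {α : Type*} [DecidableEq α]

lemma first_split {x : α} : ∀ {l : List α}, x ∈ l → ∃ p q, l = p ++ x :: q ∧ x ∉ p := by
  intro l
  induction l with
  | nil => simp
  | cons y t ih =>
    intro hmem
    by_cases hy : x = y
    · exact ⟨[], t, by simp [hy], by simp⟩
    · obtain ⟨p, q, h1, h2⟩ := ih ((List.mem_cons.mp hmem).resolve_left hy)
      refine ⟨y :: p, q, by simp [h1], ?_⟩
      simp only [List.mem_cons]
      push_neg
      exact ⟨hy, h2⟩

lemma one_split {x : α} {l : List α} (h : l.count x = 1) :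
    ∃ p q, l = p ++ x :: q ∧ x ∉ p ∧ x ∉ q := by
  have hx : x ∈ l := List.count_pos_iff.mp (by omega)
  obtain ⟨p, q, h1, h2⟩ := first_split hx
  refine ⟨p, q, h1, h2, ?_⟩
  rw [h1, List.count_append, List.count_cons_self, List.count_eq_zero_of_not_mem h2] at h
  exact List.count_eq_zero.mp (by omega)

lemma two_split {x : α} : ∀ {l : List α}, 2 ≤ l.count x →
    ∃ a m b, l = a ++ x :: (m ++ x :: b) ∧ x ∉ m := by
  intro l
  induction l with
  | nil => simp
  | cons y t ih =>
    intro hc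
    by_cases hy : y = x
    · subst hy
      have h1 : y ∈ t := by
        rw [List.count_cons_self] at hc
        exact List.count_pos_iff.mp (by omega)
      obtain ⟨p, q, h2, h3⟩ := first_split h1
      exact ⟨[], p, q, by simp [h2], h3⟩
    · obtain ⟨a, m, b, h1, h2⟩ := ih (by
        rwa [List.count_cons_of_ne hy] at hc)
      exact ⟨y :: a, m, b, by simp [h1], h2⟩

end ListSplit

section An

variable {n : ℕ} [NeZero n] {W : Type*} [Group W] (cs : CoxeterSystem (CoxeterMatrix.Aₙ n) W)

lemma An_apply (i j : Fin n) : (CoxeterMatrix.Aₙ n) i j =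
    if i = j then 1 else if (j : ℕ) + 1 = i ∨ (i : ℕ) + 1 = j then 3 else 2 := rfl

lemma An_two {i j : Fin n} (h : (i : ℕ) + 2 ≤ (j : ℕ)) : (CoxeterMatrix.Aₙ n) i j = 2 := by
  rw [An_apply]
  rw [if_neg (fun he => absurd (congrArg Fin.val he) (by omega))]
  rw [if_neg (by omega)]

lemma An_three {i j : Fin n} (h : (i : ℕ) + 1 = (j : ℕ)) : (CoxeterMatrix.Aₙ n) i j = 3 := by
  rw [An_apply]
  rw [if_neg (fun he => absurd (congrArg Fin.val he) (by omega))]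
  rw [if_pos (Or.inr h)]

/-- Case A: all letters of `m` commute with `k`; then `a ++ k :: m ++ k :: b` is not reduced. -/
lemma not_redex_of_comm {u : W} {k : Fin n} {m a b : List (Fin n)}
    (hcomm : ∀ x ∈ m, (CoxeterMatrix.Aₙ n) k x = 2) :
    ¬ IsRedexOf cs (a ++ k :: (m ++ k :: b)) u := by
  rintro ⟨hprod, hred⟩
  have hc : cs.simple k * cs.wordProd m = cs.wordProd m * cs.simple k :=
    simple_mul_wordProd_comm cs (fun x hx => comm_of_two cs (hcomm x hx))
  have heq : cs.wordProd (a ++ k :: (m ++ k :: b)) = cs.wordProd (a ++ (m ++ b)) := by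
    simp only [cs.wordProd_append, cs.wordProd_cons]
    rw [← mul_assoc (cs.simple k), hc]
    simp [mul_assoc, cs.simple_mul_simple_cancel_left]
  have hlen := cs.length_wordProd_le (a ++ (m ++ b))
  rw [← heq, hred] at hlen
  simp [List.length_append] at hlen

/-- Key lemma: a reduced word of an FC element has no factor `k :: m ++ [k]` where all letters of
`m` are greater than `k`. -/
lemma key_lemma {u : W} (hu : IsFC cs u) :
    ∀ (N : ℕ) (m : List (Fin n)) (k : Fin n) (a b : List (Fin n)), m.length ≤ N →
      (∀ x ∈ m, (k : ℕ) < (x : ℕ)) → ¬ IsRedexOf cs (a ++ k :: (m ++ k :: b)) u := by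
  intro N
  induction N with
  | zero =>
    intro m k a b hlen _
    have : m = [] := List.eq_nil_of_length_eq_zero (by omega)
    subst this
    exact not_redex_of_comm cs (by simp)
  | succ N ih =>
    intro m k a b hlen hgt hredex
    by_cases hex : ∃ x ∈ m, (x : ℕ) = (k : ℕ) + 1
    · obtain ⟨k', hk'm, hk'⟩ := hex
      have hkk' : (CoxeterMatrix.Aₙ n) k k' = 3 := An_three hk'.symm
      have hne : k' ≠ k := fun he => by rw [he] at hk'; omega
      rcases Nat.lt_or_ge (m.count k') 2 with hcnt | hcnt
      · -- exactly one occurrence of k'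
        have hone : m.count k' = 1 := by
          have := List.count_pos_iff.mpr hk'm
          omega
        obtain ⟨p, q, hm, hp, hq⟩ := one_split hone
        have hcp : ∀ x ∈ p, (CoxeterMatrix.Aₙ n) k x = 2 := by
          intro x hx
          have hxm : x ∈ m := by rw [hm]; simp [hx]
          have : (x : ℕ) ≠ (k : ℕ) + 1 := fun he =>
            hp (by rwa [show x = k' from Fin.ext (by omega)] at hx)
          exact An_two (by have := hgt x hxm; omega)
        have hcq : ∀ x ∈ q, (CoxeterMatrix.Aₙ n) k x = 2 := by
          intro x hx
          have hxm : x ∈ m := by rw [hm]; simp [hx]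
          have : (x : ℕ) ≠ (k : ℕ) + 1 := fun he =>
            hq (by rwa [show x = k' from Fin.ext (by omega)] at hx)
          exact An_two (by have := hgt x hxm; omega)
        -- build the braided word
        set ω := a ++ k :: (m ++ k :: b) with hω
        set ω' := a ++ (p ++ (k' :: k :: k' :: (q ++ b))) with hω'
        have hcp' : cs.simple k * cs.wordProd p = cs.wordProd p * cs.simple k :=
          simple_mul_wordProd_comm cs (fun x hx => comm_of_two cs (hcp x hx))
        have hcq' : cs.simple k * cs.wordProd q = cs.wordProd q * cs.simple k :=
          simple_mul_wordProd_comm cs (fun x hx => comm_of_two cs (hcq x hx))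
        have hbraid := braid_of_three cs hkk'
        have hshuffle := shuffle (cs.wordProd p) (cs.wordProd q) (cs.wordProd b)
          (cs.simple k) (cs.simple k') hcp' hcq' hbraid
        have hprod : cs.wordProd ω = cs.wordProd ω' := by
          rw [hω, hω', hm]
          simp only [cs.wordProd_append, cs.wordProd_cons, List.append_assoc, List.cons_append]
          rw [hshuffle]
        have hlen' : ω'.length = ω.length := by
          rw [hω, hω', hm]; simp; omega
        have hred' : IsRedexOf cs ω' u := by
          constructor
          · rw [← hprod]; exact hredex.1
          · unfold CoxeterSystem.IsReduced
            rw [← hprod, hlen', hredex.1]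
            have := hredex.2
            unfold CoxeterSystem.IsReduced at this
            rw [hredex.1] at this
            exact this
        have hcount := commEquiv_count (hu ω ω' hredex hred') k
        have hkm : m.count k = 0 := by
          rw [List.count_eq_zero]
          intro hkm
          have := hgt k hkm; omega
        have hkp : p.count k = 0 := by
          rw [List.count_eq_zero]
          intro hx
          have : k ∈ m := by rw [hm]; simp [hx]
          have := hgt k this; omega
        have hkq : q.count k = 0 := by
          rw [List.count_eq_zero]
          intro hx
          have : k ∈ m := by rw [hm]; simp [hx]
          have := hgt k this; omega
        rw [hω, hω'] at hcount
        simp [List.count_append, List.count_cons, hkm, hkp, hkq, hne] at hcount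
      · -- at least two occurrences of k'
        obtain ⟨p, m₁, q, hm, hm₁⟩ := two_split hcnt
        have hlt : ∀ x ∈ m₁, (k' : ℕ) < (x : ℕ) := by
          intro x hx
          have hxm : x ∈ m := by rw [hm]; simp [hx]
          have h1 := hgt x hxm
          have h2 : x ≠ k' := fun he => hm₁ (he ▸ hx)
          have h3 : (x : ℕ) ≠ (k' : ℕ) := fun he => h2 (Fin.ext he)
          omega
        have hlen₁ : m₁.length ≤ N := by
          rw [hm] at hlen
          simp [List.length_append] at hlen
          omega
        apply ih m₁ k' (a ++ k :: p) (q ++ k :: b) hlen₁ hlt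
        have : a ++ k :: (m ++ k :: b) =
            (a ++ k :: p) ++ k' :: (m₁ ++ k' :: (q ++ k :: b)) := by
          rw [hm]; simp
        rwa [this] at hredex
    · push_neg at hex
      refine not_redex_of_comm cs (fun x hx => ?_) hredex
      exact An_two (by have h1 := hgt x hx; have h2 := hex x hx; omega)

end An

open Fin.NatCast in
/-- If the generator σ₁ (index `((0 : ℕ) : Fin n)` of the type `Aₙ` Coxeter group) lies in the
support of a fully commutative element `u`, then it occurs exactly once in every reduced
expression of `u`. -/
theorem sigma_one_occurs_once (n : ℕ) [NeZero n] {W : Type*} [Group W]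
    (cs : CoxeterSystem (CoxeterMatrix.Aₙ n) W) (u : W) (hu : IsFC cs u)
    (hsupp : ∃ ω, IsRedexOf cs ω u ∧ ((0 : ℕ) : Fin n) ∈ ω) :
    ∀ ω, IsRedexOf cs ω u → ω.count ((0 : ℕ) : Fin n) = 1 := by
  intro ω hω
  obtain ⟨ω₀, h₀, hmem⟩ := hsupp
  have hc : ω₀.count ((0 : ℕ) : Fin n) = ω.count ((0 : ℕ) : Fin n) :=
    commEquiv_count (hu ω₀ ω h₀ hω) _
  have hpos : 1 ≤ ω.count ((0 : ℕ) : Fin n) := by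
    rw [← hc]
    exact List.count_pos_iff.mpr hmem
  by_contra hne
  have h2 : 2 ≤ ω.count ((0 : ℕ) : Fin n) := by omega
  obtain ⟨a, m, b, hsplit, hm⟩ := two_split h2
  have hgt : ∀ x ∈ m, (((0 : ℕ) : Fin n) : ℕ) < (x : ℕ) := by
    intro x hx
    have h1 : x ≠ ((0 : ℕ) : Fin n) := fun he => hm (he ▸ hx)
    have h0 : (((0 : ℕ) : Fin n) : ℕ) = 0 := by simp
    rw [h0]
    have : (x : ℕ) ≠ 0 := by
      intro he
      exact h1 (Fin.ext (by rw [he, h0]))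
    omega
  exact key_lemma cs hu m.length m _ a b le_rfl hgt (hsplit ▸ hω)
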